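/- Let p, q ∈ [1,∞] with 1/p + 1/q = 1, let F ⊆ [0,1]ⁿ be a nonempty convex compact set, η > 0, and let R : ℝⁿ → ℝ be differentiable and β-strongly convex with respect to the ℓ_p norm on F for some β > 0, with Bregman divergence D_R(a,b) = R(a) − R(b) − ⟨∇R(b), a−b⟩. Let x₁,…,x_T ∈ [0,1]ⁿ, let g₁ ∈ F minimize R over F, and for each t ≥ 1 let g_{t+1} ∈ F minimize g ↦ η⟨g, x_t⟩ + D_R(g, g_t) over F. Then for every f' ∈ F: Σ_{t=1}^T ⟨g_{t+1}, x_t⟩ ≤ Σ_{t=1}^T ⟨f', x_t⟩ + R_max²/η − (β/(2η)) Σ_{t=1}^T ‖g_{t+1} − g_t‖_p², where R_max² := max_{f∈F} R(f) − min_{f∈F} R(f). -/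

import Mathlib

open scoped BigOperators ENNReal

noncomputable section

/-- The bilinear pairing `⟨a, b⟩ = ∑ i, a i * b i` on `ℝⁿ`. -/
def ip {n : ℕ} (a b : Fin n → ℝ) : ℝ := ∑ i, a i * b i

/-- The `ℓ_p` norm on `ℝⁿ`, for `p ∈ [1, ∞]` (`‖a‖_∞ = max_i |a i|`). -/
def lpNorm {n : ℕ} (p : ℝ≥0∞) (a : Fin n → ℝ) : ℝ :=
  if p = ⊤ then ⨆ i, |a i| else (∑ i, |a i| ^ p.toReal) ^ (1 / p.toReal)

/-- `R` is `β`-strongly convex with respect to the `ℓ_p` norm on the convex set `F`. -/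
def StronglyConvexOnWrt {n : ℕ} (F : Set (Fin n → ℝ)) (β : ℝ) (p : ℝ≥0∞)
    (R : (Fin n → ℝ) → ℝ) : Prop :=
  ∀ a ∈ F, ∀ b ∈ F, ∀ l : ℝ, 0 ≤ l → l ≤ 1 →
    R (l • a + (1 - l) • b) ≤
      l * R a + (1 - l) * R b - β / 2 * l * (1 - l) * (lpNorm p (a - b)) ^ 2

/-- The Bregman divergence `D_R(a,b) = R a - R b - ⟨∇R b, a - b⟩`. -/
def bregman {n : ℕ} (R : (Fin n → ℝ) → ℝ) (a b : Fin n → ℝ) : ℝ :=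
  R a - R b - fderiv ℝ R b (a - b)

open Filter Set in
lemma slope_tendsto {n : ℕ} (R : (Fin n → ℝ) → ℝ) (hdiff : Differentiable ℝ R)
    (b v : Fin n → ℝ) :
    Tendsto (fun l : ℝ => (R (b + l • v) - R b) / l) (nhdsWithin 0 (Set.Ioi 0))
      (nhds (fderiv ℝ R b v)) := by
  have hγ : HasDerivAt (fun l : ℝ => b + l • v) v 0 := by
    simpa using ((hasDerivAt_id (0:ℝ)).smul_const v).const_add b
  have hφ : HasDerivAt (fun l : ℝ => R (b + l • v)) (fderiv ℝ R b v) 0 := by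
    have := (hdiff (b + (0:ℝ) • v)).hasFDerivAt.comp_hasDerivAt 0 hγ
    rw [zero_smul, add_zero] at this; exact this
  have h2 := (hφ.hasDerivWithinAt (s := Set.Ioi 0))
  rw [hasDerivWithinAt_iff_tendsto_slope] at h2
  have : Set.Ioi (0:ℝ) \ {0} = Set.Ioi 0 := by simp
  rw [this] at h2
  refine h2.congr (fun l => ?_)
  simp [slope_def_field]

open Filter Set in
lemma ev_Ioc : ∀ᶠ s in nhdsWithin (0:ℝ) (Set.Ioi 0), s ∈ Set.Ioc (0:ℝ) 1 :=
  Ioc_mem_nhdsGT_of_mem (by constructor <;> norm_num)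

lemma fderiv_ge {n : ℕ} (R : (Fin n → ℝ) → ℝ) (hdiff : Differentiable ℝ R)
    (b v : Fin n → ℝ) (c : ℝ)
    (h : ∀ s : ℝ, 0 < s → s ≤ 1 → c * s ≤ R (b + s • v) - R b) :
    c ≤ fderiv ℝ R b v := by
  refine ge_of_tendsto (slope_tendsto R hdiff b v) ?_
  filter_upwards [ev_Ioc] with s hs
  rw [le_div_iff₀ hs.1]
  exact h s hs.1 hs.2

open Filter Set in
lemma bregman_lower {n : ℕ} {F : Set (Fin n → ℝ)} {β : ℝ} {p : ℝ≥0∞}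
    {R : (Fin n → ℝ) → ℝ} (hdiff : Differentiable ℝ R)
    (hRsc : StronglyConvexOnWrt F β p R) {a b : Fin n → ℝ} (ha : a ∈ F) (hb : b ∈ F) :
    β / 2 * (lpNorm p (a - b)) ^ 2 ≤ bregman R a b := by
  have key : fderiv ℝ R b (a - b) ≤ R a - R b - β / 2 * (lpNorm p (a - b))^2 := by
    have h1 := slope_tendsto R hdiff b (a - b)
    have h2 : Tendsto (fun l : ℝ => (R a - R b - β / 2 * (lpNorm p (a - b))^2) +
        l * (β / 2 * (lpNorm p (a - b))^2)) (nhdsWithin 0 (Set.Ioi 0))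
        (nhds (R a - R b - β / 2 * (lpNorm p (a - b))^2)) := by
      have : Tendsto (fun l : ℝ => (R a - R b - β / 2 * (lpNorm p (a - b))^2) +
          l * (β / 2 * (lpNorm p (a - b))^2)) (nhds 0)
          (nhds ((R a - R b - β / 2 * (lpNorm p (a - b))^2) + 0 * (β / 2 * (lpNorm p (a - b))^2))) :=
        (tendsto_const_nhds.add (tendsto_id.mul tendsto_const_nhds))
      simpa using this.mono_left nhdsWithin_le_nhds
    refine le_of_tendsto_of_tendsto h1 h2 ?_
    filter_upwards [ev_Ioc] with l hl
    have hsc := hRsc a ha b hb l hl.1.le hl.2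
    have heq : l • a + (1 - l) • b = b + l • (a - b) := by
      rw [sub_smul, one_smul, smul_sub]; abel
    rw [heq] at hsc
    rw [div_le_iff₀ hl.1]
    nlinarith [hl.1]
  simp only [bregman]
  linarith

lemma ip_sub' {n : ℕ} (a b c : Fin n → ℝ) : ip (a - b) c = ip a c - ip b c := by
  simp [ip, sub_mul, Finset.sum_sub_distrib]

lemma ip_add_smul {n : ℕ} (m w c : Fin n → ℝ) (s : ℝ) :
    ip (m + s • w) c = ip m c + s * ip w c := by
  simp [ip, add_mul, Finset.sum_add_distrib, Finset.mul_sum, mul_assoc]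

lemma seg_mem {n : ℕ} {F : Set (Fin n → ℝ)} (hFconv : Convex ℝ F)
    {m u : Fin n → ℝ} (hm : m ∈ F) (hu : u ∈ F) {s : ℝ} (h0 : 0 ≤ s) (h1 : s ≤ 1) :
    m + s • (u - m) ∈ F := by
  have := hFconv hm hu (by linarith : (0:ℝ) ≤ 1 - s) h0 (by ring)
  have heq : (1 - s) • m + s • u = m + s • (u - m) := by
    rw [sub_smul, one_smul, smul_sub]; abel
  rwa [heq] at this

/-- **Be-the-leader bound for Mirror Descent with negative term.**
For every `f' ∈ F`:
`∑_{t=1}^T ⟨g (t+1), x t⟩ ≤ ∑_{t=1}^T ⟨f', x t⟩ + R_max²/η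
  - (β/(2η)) ∑_{t=1}^T ‖g (t+1) - g t‖_p²`,
where `R_max² = max_{f∈F} R f - min_{f∈F} R f`. -/
theorem md_lookahead_bound {n T : ℕ} (p q : ℝ≥0∞)
    (hp : 1 ≤ p) (hq : 1 ≤ q) (hpq : 1 / p + 1 / q = 1)
    (F : Set (Fin n → ℝ)) (hF : F.Nonempty) (hFsub : F ⊆ Set.Icc 0 1)
    (hFconv : Convex ℝ F) (hFcomp : IsCompact F)
    (η : ℝ) (hη : 0 < η) (β : ℝ) (hβ : 0 < β)
    (R : (Fin n → ℝ) → ℝ) (hdiff : Differentiable ℝ R)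
    (hRsc : StronglyConvexOnWrt F β p R)
    (x : ℕ → (Fin n → ℝ)) (hx : ∀ t ∈ Finset.Icc 1 T, x t ∈ Set.Icc (0 : Fin n → ℝ) 1)
    (g : ℕ → (Fin n → ℝ))
    (hg1 : g 1 ∈ F ∧ ∀ u ∈ F, R (g 1) ≤ R u)
    (hg : ∀ t, 1 ≤ t → g (t + 1) ∈ F ∧
      ∀ u ∈ F, η * ip (g (t + 1)) (x t) + bregman R (g (t + 1)) (g t) ≤
        η * ip u (x t) + bregman R u (g t)) :
    ∀ f' ∈ F,
      (∑ t ∈ Finset.Icc 1 T, ip (g (t + 1)) (x t)) ≤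
      (∑ t ∈ Finset.Icc 1 T, ip f' (x t)) + (sSup (R '' F) - sInf (R '' F)) / η -
        β / (2 * η) * ∑ t ∈ Finset.Icc 1 T, (lpNorm p (g (t + 1) - g t)) ^ 2 := by
  intro f' hf'
  have hcont : Continuous R := hdiff.continuous
  have hcompim : IsCompact (R '' F) := hFcomp.image hcont
  -- membership of all iterates
  have gmem : ∀ t : ℕ, g (t + 1) ∈ F := by
    intro t
    cases t with
    | zero => exact hg1.1
    | succ s => exact (hg (s + 1) (by omega)).1
  -- per-step key inequality
  have key : ∀ t ∈ Finset.Icc 1 T,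
      η * ip (g (t + 1)) (x t) + β / 2 * (lpNorm p (g (t + 1) - g t)) ^ 2 ≤
      η * ip f' (x t) + (bregman R f' (g t) - bregman R f' (g (t + 1))) := by
    intro t ht
    simp only [Finset.mem_Icc] at ht
    obtain ⟨t', rfl⟩ : ∃ t', t = t' + 1 := ⟨t - 1, by omega⟩
    have hmF : g (t' + 1 + 1) ∈ F := gmem (t' + 1)
    have hgtF : g (t' + 1) ∈ F := gmem t'
    -- abbreviations (plain `have`-style, via generalize-free lets would cause atom issues)
    -- first order condition at g (t'+1+1)
    have hfo : fderiv ℝ R (g (t' + 1)) (f' - g (t' + 1 + 1)) -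
        η * ip (f' - g (t' + 1 + 1)) (x (t' + 1)) ≤
        fderiv ℝ R (g (t' + 1 + 1)) (f' - g (t' + 1 + 1)) := by
      refine fderiv_ge R hdiff _ _ _ ?_
      intro s hs0 hs1
      have hmemu : g (t' + 1 + 1) + s • (f' - g (t' + 1 + 1)) ∈ F :=
        seg_mem hFconv hmF hf' hs0.le hs1
      have hmin := (hg (t' + 1) (by omega)).2 _ hmemu
      simp only [bregman] at hmin
      have e1 : ip (g (t' + 1 + 1) + s • (f' - g (t' + 1 + 1))) (x (t' + 1)) =
          ip (g (t' + 1 + 1)) (x (t' + 1)) + s * ip (f' - g (t' + 1 + 1)) (x (t' + 1)) :=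
        ip_add_smul _ _ _ _
      have e2 : fderiv ℝ R (g (t' + 1)) (g (t' + 1 + 1) + s • (f' - g (t' + 1 + 1)) - g (t' + 1)) =
          fderiv ℝ R (g (t' + 1)) (g (t' + 1 + 1) - g (t' + 1)) +
          s * fderiv ℝ R (g (t' + 1)) (f' - g (t' + 1 + 1)) := by
        have e0 : g (t' + 1 + 1) + s • (f' - g (t' + 1 + 1)) - g (t' + 1) =
            (g (t' + 1 + 1) - g (t' + 1)) + s • (f' - g (t' + 1 + 1)) := by abel
        rw [e0, map_add, map_smul, smul_eq_mul]
      rw [e1, e2] at hmin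
      nlinarith [hmin]
    -- Bregman three-point identity
    have hid : bregman R f' (g (t' + 1)) - bregman R f' (g (t' + 1 + 1)) -
        bregman R (g (t' + 1 + 1)) (g (t' + 1)) =
        fderiv ℝ R (g (t' + 1 + 1)) (f' - g (t' + 1 + 1)) -
        fderiv ℝ R (g (t' + 1)) (f' - g (t' + 1 + 1)) := by
      have e3 : fderiv ℝ R (g (t' + 1)) (f' - g (t' + 1)) =
          fderiv ℝ R (g (t' + 1)) (f' - g (t' + 1 + 1)) +
          fderiv ℝ R (g (t' + 1)) (g (t' + 1 + 1) - g (t' + 1)) := by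
        rw [← map_add]
        congr 1
        abel
      simp only [bregman]
      rw [e3]
      ring
    have hlow : β / 2 * (lpNorm p (g (t' + 1 + 1) - g (t' + 1))) ^ 2 ≤
        bregman R (g (t' + 1 + 1)) (g (t' + 1)) :=
      bregman_lower hdiff hRsc hmF hgtF
    have hips : ip (f' - g (t' + 1 + 1)) (x (t' + 1)) =
        ip f' (x (t' + 1)) - ip (g (t' + 1 + 1)) (x (t' + 1)) :=
      ip_sub' _ _ _
    have hips' : η * ip (f' - g (t' + 1 + 1)) (x (t' + 1)) =
        η * ip f' (x (t' + 1)) - η * ip (g (t' + 1 + 1)) (x (t' + 1)) := by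
      rw [hips]; ring
    linarith
  -- sum the key inequalities
  set D : ℕ → ℝ := fun t => bregman R f' (g t) with hD
  have htel : ∑ t ∈ Finset.Icc 1 T, (D t - D (t + 1)) = D 1 - D (T + 1) := by
    rw [← Finset.Ico_add_one_right_eq_Icc, Finset.sum_Ico_eq_sum_range]
    have := Finset.sum_range_sub' (f := fun i => D (1 + i)) T
    simp only [show T + 1 - 1 = T from rfl]
    rw [show T + 1 = 1 + T by omega]
    convert this using 3
    rw [add_assoc]
  have hsum : η * (∑ t ∈ Finset.Icc 1 T, ip (g (t + 1)) (x t)) +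
      β / 2 * (∑ t ∈ Finset.Icc 1 T, (lpNorm p (g (t + 1) - g t)) ^ 2) ≤
      η * (∑ t ∈ Finset.Icc 1 T, ip f' (x t)) + (D 1 - D (T + 1)) := by
    have h := Finset.sum_le_sum key
    rw [Finset.sum_add_distrib, Finset.sum_add_distrib, htel, ← Finset.mul_sum,
      ← Finset.mul_sum, ← Finset.mul_sum] at h
    exact h
  -- bound D 1 from above
  have hfo1 : 0 ≤ fderiv ℝ R (g 1) (f' - g 1) := by
    refine fderiv_ge R hdiff (g 1) (f' - g 1) 0 ?_
    intro s hs0 hs1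
    have := hg1.2 _ (seg_mem hFconv hg1.1 hf' hs0.le hs1)
    linarith
  have hRf' : R f' ≤ sSup (R '' F) := le_csSup hcompim.bddAbove ⟨f', hf', rfl⟩
  have hRg1 : sInf (R '' F) ≤ R (g 1) := csInf_le hcompim.bddBelow ⟨g 1, hg1.1, rfl⟩
  have hD1 : D 1 ≤ sSup (R '' F) - sInf (R '' F) := by
    simp only [hD, bregman]
    linarith
  -- D (T+1) nonnegative
  have hDT : 0 ≤ D (T + 1) := by
    refine le_trans ?_ (bregman_lower hdiff hRsc hf' (gmem T))
    positivity
  -- S nonnegative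
  have hS : 0 ≤ ∑ t ∈ Finset.Icc 1 T, (lpNorm p (g (t + 1) - g t)) ^ 2 :=
    Finset.sum_nonneg fun t _ => sq_nonneg _
  set SA := ∑ t ∈ Finset.Icc 1 T, ip (g (t + 1)) (x t)
  set SB := ∑ t ∈ Finset.Icc 1 T, ip f' (x t)
  set SS := ∑ t ∈ Finset.Icc 1 T, (lpNorm p (g (t + 1) - g t)) ^ 2
  set C := sSup (R '' F) - sInf (R '' F) with hC
  have hnum : (0:ℝ) ≤ η * SB + C - β / 2 * SS - η * SA := by linarith
  have hkey : SB + C / η - β / (2 * η) * SS - SA =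
      (η * SB + C - β / 2 * SS - η * SA) / η := by
    field_simp
  have := div_nonneg hnum hη.le
  linarith [hkey ▸ this]
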